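/- Adversarial delay tradeoff: with n parties and t Byzantine, under round-robin anchor selection over a period of n consecutive rounds, the number of rounds r such that the anchors of both rounds r−2 and r−1 are honest is at least n − 2t; hence at least n − 2t commits occur per n rounds (deterministic counting version of the latency lemma). -/

import Mathlib

/-- If two naturals are congruent mod `n` and within `n` of each other, they are equal. -/
lemma mod_eq_of_close {n a b : ℕ} (hab : a % n = b % n) (h1 : a ≤ b) (h2 : b < a + n) :
    a = b := by
  have hd : n ∣ b - a := (Nat.modEq_iff_dvd' h1).mp hab
  rcases hd with ⟨k, hk⟩
  rcases k with _ | k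
  · omega
  · have : n * (k + 1) ≥ n := by nlinarith
    omega

lemma spoil_bound (n t : ℕ) (hn : 0 < n) (ht : t ≤ n)
    (H : Finset (Fin n)) (hH : H.card = n - t)
    (r₀ c : ℕ) (hc : c ≤ r₀) :
    ((Finset.Ico r₀ (r₀ + n)).filter
      (fun r => (⟨(r - c) % n, Nat.mod_lt _ hn⟩ : Fin n) ∉ H)).card ≤ t := by
  have hcompl : Hᶜ.card = t := by
    have := Finset.card_compl H
    simp [hH, Fintype.card_fin] at this
    omega
  calc ((Finset.Ico r₀ (r₀ + n)).filter
      (fun r => (⟨(r - c) % n, Nat.mod_lt _ hn⟩ : Fin n) ∉ H)).card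
      ≤ Hᶜ.card := by
        apply Finset.card_le_card_of_injOn
          (fun r => (⟨(r - c) % n, Nat.mod_lt _ hn⟩ : Fin n))
        · intro r hr
          simp only [Finset.mem_coe, Finset.mem_filter] at hr
          simpa using hr.2
        · intro r hr s hs hrs
          simp only [Finset.coe_filter, Set.mem_setOf_eq, Finset.mem_Ico] at hr hs
          have h1 : (r - c) % n = (s - c) % n := by
            simpa using congrArg Fin.val hrs
          rcases le_total (r - c) (s - c) with h | h
          · have := mod_eq_of_close h1 h (by omega)
            omega
          · have := mod_eq_of_close h1.symm h (by omega)
            omega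
    _ = t := hcompl

/-- deterministic counting version of the latency lemma: with
round-robin anchors `r ↦ r mod n` and honest set `H` of size `n - t`, in any window
of `n` consecutive rounds (starting at `r₀ ≥ 2`) at least `n - 2t` rounds have both
preceding anchors honest, hence at least `n - 2t` commits per `n` rounds. -/
theorem stmt_18 (n t : ℕ) (hn : 0 < n) (ht : t ≤ n)
    (H : Finset (Fin n)) (hH : H.card = n - t)
    (r₀ : ℕ) (hr₀ : 2 ≤ r₀) :
    n - 2 * t ≤ ((Finset.Ico r₀ (r₀ + n)).filter
      (fun r => (⟨(r - 2) % n, Nat.mod_lt _ hn⟩ : Fin n) ∈ H ∧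
                 (⟨(r - 1) % n, Nat.mod_lt _ hn⟩ : Fin n) ∈ H)).card := by
  have h2 := spoil_bound n t hn ht H hH r₀ 2 hr₀
  have h1 := spoil_bound n t hn ht H hH r₀ 1 (by omega)
  have hsplit := Finset.card_filter_add_card_filter_not
    (s := Finset.Ico r₀ (r₀ + n))
    (p := fun r => (⟨(r - 2) % n, Nat.mod_lt _ hn⟩ : Fin n) ∈ H ∧
                 (⟨(r - 1) % n, Nat.mod_lt _ hn⟩ : Fin n) ∈ H)
  have hWcard : (Finset.Ico r₀ (r₀ + n)).card = n := by simp
  have hsub : (Finset.Ico r₀ (r₀ + n)).filter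
      (fun r => ¬ ((⟨(r - 2) % n, Nat.mod_lt _ hn⟩ : Fin n) ∈ H ∧
                 (⟨(r - 1) % n, Nat.mod_lt _ hn⟩ : Fin n) ∈ H)) ⊆
      ((Finset.Ico r₀ (r₀ + n)).filter
        (fun r => (⟨(r - 2) % n, Nat.mod_lt _ hn⟩ : Fin n) ∉ H)) ∪
      ((Finset.Ico r₀ (r₀ + n)).filter
        (fun r => (⟨(r - 1) % n, Nat.mod_lt _ hn⟩ : Fin n) ∉ H)) := by
    intro r hr
    simp only [Finset.mem_filter, Finset.mem_union] at hr ⊢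
    tauto
  have hbad := le_trans (Finset.card_le_card hsub) (Finset.card_union_le _ _)
  omega
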